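/- For γ̃ > 0, c > 0, n ≥ 1 and ε > 0, there exist constants C > 0 and T ≥ 1 such that for all t ≥ T, (∫_{|ξ|<ε} cos²(γ̃|ξ|t) e^{-2c|ξ|²t} dξ)^{1/2} ≥ C t^{-n/4}. -/

import Mathlib

open MeasureTheory Metric Set

lemma cos_sq_interval_lb (ω a b : ℝ) (hω : 0 < ω) :
    (b - a)/2 - 1/ω ≤ ∫ y in a..b, Real.cos (ω * y)^2 := by
  rw [intervalIntegral.integral_comp_mul_left (fun u => Real.cos u ^ 2) hω.ne',
    integral_cos_sq, smul_eq_mul]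
  set CB := Real.cos (ω * b) * Real.sin (ω * b) with hCB
  set CA := Real.cos (ω * a) * Real.sin (ω * a) with hCA
  have h1 : -1 ≤ CB := by
    nlinarith [Real.neg_one_le_cos (ω*b), Real.cos_le_one (ω*b),
      Real.neg_one_le_sin (ω*b), Real.sin_le_one (ω*b)]
  have h2 : CA ≤ 1 := by
    nlinarith [Real.neg_one_le_cos (ω*a), Real.cos_le_one (ω*a),
      Real.neg_one_le_sin (ω*a), Real.sin_le_one (ω*a)]
  have key : ω⁻¹ * ((CB - CA + ω*b - ω*a)/2) = (b-a)/2 + (CB - CA)/(2*ω) := by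
    field_simp; ring
  rw [key]
  have h3 : (-2)/(2*ω) ≤ (CB - CA)/(2*ω) :=
    div_le_div_of_nonneg_right (by linarith) (by positivity)
  have h4 : (-2)/(2*ω) = -(1/ω) := by field_simp
  linarith

set_option maxHeartbeats 1000000 in
theorem stmt_15 (n : ℕ) (hn : 1 ≤ n) (γ' c ε : ℝ) (hγ' : 0 < γ') (hc : 0 < c)
    (hε : 0 < ε) :
    ∃ C > 0, ∃ T : ℝ, 1 ≤ T ∧ ∀ t : ℝ, T ≤ t →
      C * t ^ (-(n : ℝ)/4)
        ≤ (∫ ξ in Metric.ball (0 : EuclideanSpace ℝ (Fin n)) ε,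
            Real.cos (γ' * ‖ξ‖ * t)^2 * Real.exp (-2*c*‖ξ‖^2*t)) ^ ((1 : ℝ)/2) := by
  set E := EuclideanSpace ℝ (Fin n)
  haveI : Nonempty (Fin n) := ⟨⟨0, hn⟩⟩
  haveI : Nontrivial E := by
    refine Module.nontrivial_of_finrank_pos (R := ℝ) (M := E) ?_
    rw [finrank_euclideanSpace_fin]; omega
  have hdim : Module.finrank ℝ E = n := finrank_euclideanSpace_fin
  set V : ℝ := (volume (ball (0 : E) 1)).toReal with hV
  have hVpos : 0 < V := by
    refine ENNReal.toReal_pos (measure_ball_pos volume (0:E) one_pos).ne' ?_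
    exact (measure_ball_lt_top).ne
  set K : ℝ := n * V * Real.exp (-(8*c)) / 4 with hK
  have hKpos : 0 < K := by
    have : (0:ℝ) < n := by exact_mod_cast hn
    positivity
  refine ⟨K ^ ((1:ℝ)/2), Real.rpow_pos_of_pos hKpos _,
    max 1 (max (4/ε^2) (16/γ'^2)), le_max_left _ _, fun t ht => ?_⟩
  have ht1 : (1:ℝ) ≤ t := le_trans (le_max_left _ _) ht
  have htpos : (0:ℝ) < t := by linarith
  set s := Real.sqrt t with hs
  have hspos : 0 < s := Real.sqrt_pos.2 htpos
  have hs2 : s^2 = t := Real.sq_sqrt htpos.le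
  -- s ≥ 2/ε and γ'*s ≥ 4
  have hsε : 2/ε ≤ s := by
    have h4 : 4/ε^2 ≤ t := le_trans (le_trans (le_max_left _ _) (le_max_right _ _)) ht
    have : (2/ε)^2 ≤ s^2 := by rw [hs2]; rw [div_pow]; norm_num; linarith [h4]
    nlinarith [hspos.le, div_nonneg (by norm_num : (0:ℝ) ≤ 2) hε.le]
  have hsγ : 4 ≤ γ' * s := by
    have h4 : 16/γ'^2 ≤ t := le_trans (le_trans (le_max_right _ _) (le_max_right _ _)) ht
    have : 4^2 ≤ (γ' * s)^2 := by
      rw [mul_pow, hs2]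
      have := (div_le_iff₀ (by positivity : (0:ℝ) < γ'^2)).1 h4
      nlinarith
    nlinarith [mul_pos hγ' hspos]
  set a : ℝ := s⁻¹ with ha
  set b : ℝ := 2 * s⁻¹ with hb
  have hapos : 0 < a := by positivity
  have hab : a < b := by rw [ha, hb]; nlinarith [inv_pos.2 hspos]
  have hbε : b ≤ ε := by
    rw [hb]
    rw [div_le_iff₀ hε] at hsε
    calc 2 * s⁻¹ = 2 / s := by ring
    _ ≤ ε := by rw [div_le_iff₀ hspos]; linarith
  set ω : ℝ := γ' * t with hω
  have hωpos : 0 < ω := by positivity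
  set f : E → ℝ := fun ξ => Real.cos (γ' * ‖ξ‖ * t)^2 * Real.exp (-2*c*‖ξ‖^2*t) with hf
  set h0 : ℝ → ℝ := fun r => Real.exp (-(8*c)) * Real.cos (γ' * r * t)^2 with hh0
  set g : ℝ → ℝ := Set.indicator (Set.Ioo a b) h0 with hg
  have hh0cont : Continuous h0 := by fun_prop
  have hfcont : Continuous f := by fun_prop
  -- Step 1: pointwise bound on ball
  have hfint : IntegrableOn f (ball (0:E) ε) volume :=
    (hfcont.continuousOn.integrableOn_compact (isCompact_closedBall 0 ε)).mono_set
      ball_subset_closedBall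
  have hgmeas : MeasurableSet ((fun ξ : E => ‖ξ‖) ⁻¹' Set.Ioo a b) :=
    (continuous_norm.measurable) measurableSet_Ioo
  have hgcomp : (fun ξ : E => g ‖ξ‖)
      = Set.indicator ((fun ξ : E => ‖ξ‖) ⁻¹' Set.Ioo a b) (fun ξ => h0 ‖ξ‖) := by
    funext ξ
    by_cases hmem : ‖ξ‖ ∈ Set.Ioo a b
    · rw [show g ‖ξ‖ = h0 ‖ξ‖ from Set.indicator_of_mem hmem h0,
        Set.indicator_of_mem (show ξ ∈ (fun ξ : E => ‖ξ‖) ⁻¹' Set.Ioo a b from hmem)]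
    · rw [show g ‖ξ‖ = 0 from Set.indicator_of_notMem hmem h0,
        Set.indicator_of_notMem (show ξ ∉ (fun ξ : E => ‖ξ‖) ⁻¹' Set.Ioo a b from hmem)]
  have hgint : IntegrableOn (fun ξ : E => g ‖ξ‖) (ball (0:E) ε) volume := by
    rw [hgcomp]
    refine Integrable.indicator ?_ hgmeas
    exact ((hh0cont.comp continuous_norm).continuousOn.integrableOn_compact
      (isCompact_closedBall 0 ε)).mono_set ball_subset_closedBall
  have step1 : ∫ ξ in ball (0:E) ε, g ‖ξ‖ ≤ ∫ ξ in ball (0:E) ε, f ξ := by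
    refine setIntegral_mono_on hgint hfint measurableSet_ball (fun ξ _ => ?_)
    by_cases hmem : ‖ξ‖ ∈ Set.Ioo a b
    · rw [show g ‖ξ‖ = h0 ‖ξ‖ from Set.indicator_of_mem hmem h0, hh0]
      have hξb : ‖ξ‖ < b := hmem.2
      have hle : ‖ξ‖^2 * t ≤ 4 := by
        have h1 : ‖ξ‖^2 ≤ b^2 := by nlinarith [norm_nonneg ξ]
        have h2 : b^2 = 4 / t := by
          rw [hb, mul_pow]
          rw [← hs2]
          field_simp
          norm_num
        rw [h2] at h1
        calc ‖ξ‖^2 * t ≤ 4/t * t := by nlinarith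
        _ = 4 := by field_simp
      have hexp : Real.exp (-(8*c)) ≤ Real.exp (-2*c*‖ξ‖^2*t) := by
        apply Real.exp_le_exp.2
        nlinarith
      calc Real.exp (-(8*c)) * Real.cos (γ' * ‖ξ‖ * t)^2
          ≤ Real.exp (-2*c*‖ξ‖^2*t) * Real.cos (γ' * ‖ξ‖ * t)^2 :=
            mul_le_mul_of_nonneg_right hexp (sq_nonneg _)
        _ = Real.cos (γ' * ‖ξ‖ * t)^2 * Real.exp (-2*c*‖ξ‖^2*t) := mul_comm _ _
    · rw [show g ‖ξ‖ = 0 from Set.indicator_of_notMem hmem h0, hf]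
      positivity
  -- Step 2: extend to whole space
  have step2 : ∫ ξ in ball (0:E) ε, g ‖ξ‖ = ∫ ξ : E, g ‖ξ‖ := by
    refine setIntegral_eq_integral_of_forall_compl_eq_zero (fun ξ hξ => ?_)
    have : ε ≤ ‖ξ‖ := by
      rw [mem_ball_zero_iff] at hξ; push_neg at hξ; exact hξ
    refine Set.indicator_of_notMem (fun hmem => ?_) h0
    exact absurd (lt_of_lt_of_le hmem.2 (le_trans hbε this)) (lt_irrefl _)
  -- Step 3: spherical coordinates
  have step3 : ∫ ξ : E, g ‖ξ‖
      = n • (V • ∫ y in Set.Ioi (0:ℝ), y ^ (n-1) • g y) := by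
    rw [integral_fun_norm_addHaar (volume : Measure E) g, hdim]
    rfl
  -- Step 4: reduce to interval
  have step4 : ∫ y in Set.Ioi (0:ℝ), y ^ (n-1) • g y
      = ∫ y in Set.Ioo a b, y ^ (n-1) * h0 y := by
    have : (fun y : ℝ => y ^ (n-1) • g y)
        = Set.indicator (Set.Ioo a b) (fun y => y ^ (n-1) * h0 y) := by
      funext y
      simp only [hg, Set.indicator_apply, smul_eq_mul, mul_ite, mul_zero]
    have hset : Set.Ioi (0:ℝ) ∩ Set.Ioo a b = Set.Ioo a b :=
      Set.inter_eq_right.2 (fun y hy => lt_trans hapos hy.1)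
    rw [this, setIntegral_indicator measurableSet_Ioo, hset]
  -- Step 5: lower bound the radial integral
  have hIoo_int1 : IntegrableOn (fun y : ℝ => y ^ (n-1) * h0 y) (Set.Ioo a b) volume :=
    ((continuous_pow (n-1)).mul hh0cont).continuousOn.integrableOn_compact
      isCompact_Icc |>.mono_set Set.Ioo_subset_Icc_self
  have hIoo_int2 : IntegrableOn (fun y : ℝ => a ^ (n-1) * h0 y) (Set.Ioo a b) volume :=
    (continuous_const.mul hh0cont).continuousOn.integrableOn_compact
      isCompact_Icc |>.mono_set Set.Ioo_subset_Icc_self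
  have step5 : ∫ y in Set.Ioo a b, a ^ (n-1) * h0 y
      ≤ ∫ y in Set.Ioo a b, y ^ (n-1) * h0 y := by
    refine setIntegral_mono_on hIoo_int2 hIoo_int1 measurableSet_Ioo (fun y hy => ?_)
    have : a ^ (n-1) ≤ y ^ (n-1) := pow_le_pow_left₀ hapos.le hy.1.le _
    have h0nn : 0 ≤ h0 y := by rw [hh0]; positivity
    nlinarith
  -- Step 6: compute the interval integral lower bound
  have step6 : a ^ (n-1) * Real.exp (-(8*c)) * ((b-a)/2 - 1/ω)
      ≤ ∫ y in Set.Ioo a b, a ^ (n-1) * h0 y := by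
    rw [MeasureTheory.integral_const_mul]
    have heq : ∫ y in Set.Ioo a b, h0 y
        = Real.exp (-(8*c)) * ∫ y in a..b, Real.cos (ω * y)^2 := by
      rw [← integral_Ioc_eq_integral_Ioo, ← intervalIntegral.integral_of_le hab.le,
        ← intervalIntegral.integral_const_mul]
      refine intervalIntegral.integral_congr (fun y _ => ?_)
      show h0 y = _
      rw [hh0, hω]
      ring_nf
    rw [heq]
    have h2 : Real.exp (-(8*c)) * ((b-a)/2 - 1/ω)
        ≤ Real.exp (-(8*c)) * ∫ y in a..b, Real.cos (ω * y)^2 :=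
      mul_le_mul_of_nonneg_left (cos_sq_interval_lb ω a b hωpos) (Real.exp_nonneg _)
    calc a ^ (n-1) * Real.exp (-(8*c)) * ((b-a)/2 - 1/ω)
        = a ^ (n-1) * (Real.exp (-(8*c)) * ((b-a)/2 - 1/ω)) := by ring
      _ ≤ a ^ (n-1) * (Real.exp (-(8*c)) * ∫ y in a..b, Real.cos (ω * y)^2) :=
          mul_le_mul_of_nonneg_left h2 (pow_nonneg hapos.le _)
  -- combine all steps
  have hR : a ^ (n-1) * Real.exp (-(8*c)) * ((b-a)/2 - 1/ω)
      ≤ ∫ y in Set.Ioi (0:ℝ), y ^ (n-1) • g y := by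
    rw [step4]; exact le_trans step6 step5
  have hlow : 1/(4*s) ≤ (b-a)/2 - 1/ω := by
    have hba : b - a = s⁻¹ := by rw [hb, ha]; ring
    have hωs : 4 * s ≤ ω := by
      rw [hω, ← hs2]
      nlinarith
    have h1 : 1/ω ≤ 1/(4*s) := by
      apply one_div_le_one_div_of_le (by positivity) hωs
    have h2 : s⁻¹/2 - 1/(4*s) = 1/(4*s) := by field_simp; ring
    rw [hba]
    linarith
  have key : K * (s⁻¹) ^ n ≤ ∫ ξ in ball (0:E) ε, f ξ := by
    have hnV : (0:ℝ) ≤ (n:ℝ) * V := by positivity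
    have c1 : (n:ℝ) * V * (a ^ (n-1) * Real.exp (-(8*c)) * (1/(4*s)))
        ≤ (n:ℝ) * V * (a ^ (n-1) * Real.exp (-(8*c)) * ((b-a)/2 - 1/ω)) := by
      exact mul_le_mul_of_nonneg_left
        (mul_le_mul_of_nonneg_left hlow (by positivity)) hnV
    have c2 : (n:ℝ) * V * (a ^ (n-1) * Real.exp (-(8*c)) * ((b-a)/2 - 1/ω))
        ≤ ∫ ξ in ball (0:E) ε, f ξ := by
      refine le_trans ?_ step1
      rw [step2, step3, nsmul_eq_mul, smul_eq_mul]
      calc (n:ℝ) * V * (a ^ (n-1) * Real.exp (-(8*c)) * ((b-a)/2 - 1/ω))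
          ≤ (n:ℝ) * V * ∫ y in Set.Ioi (0:ℝ), y ^ (n-1) • g y :=
            mul_le_mul_of_nonneg_left hR hnV
        _ = (n:ℝ) * (V * ∫ y in Set.Ioi (0:ℝ), y ^ (n-1) • g y) := by ring
    have c3 : K * (s⁻¹) ^ n = (n:ℝ) * V * (a ^ (n-1) * Real.exp (-(8*c)) * (1/(4*s))) := by
      obtain ⟨m, hm⟩ : ∃ m, n = m + 1 := ⟨n - 1, (Nat.succ_pred_eq_of_pos hn).symm⟩
      subst hm
      rw [hK, ha]
      simp only [Nat.add_sub_cancel]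
      rw [pow_succ]
      field_simp
    rw [c3]
    exact le_trans c1 c2
  -- final rpow manipulation
  have hsinv : (s⁻¹) ^ n = t ^ (-(1/2 : ℝ) * (n:ℝ)) := by
    have h1 : s⁻¹ = t ^ (-(1/2) : ℝ) := by
      rw [hs, Real.sqrt_eq_rpow, Real.rpow_neg htpos.le]
    rw [h1, ← Real.rpow_natCast (t ^ (-(1/2) : ℝ)) n, ← Real.rpow_mul htpos.le]
  have hfinal : K ^ ((1:ℝ)/2) * t ^ (-(n:ℝ)/4) = (K * (s⁻¹) ^ n) ^ ((1:ℝ)/2) := by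
    rw [Real.mul_rpow hKpos.le (by positivity), hsinv, ← Real.rpow_mul htpos.le]
    congr 1
    ring
  rw [hfinal]
  exact Real.rpow_le_rpow (by positivity) key (by norm_num)
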